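/- For j = 1,2,3,4 let {R_k^{(j)} : k ∈ ℤ} be families of axis-parallel rectangles in ℝ² with R_k^{(j)} = I_k^{(j)} × J_k^{(j)} where J_k^{(j)} has length 2^k, and suppose Σ_k |R_k^{(j)}| < ∞ for each j. Assume the partial symmetry and nondegeneracy hypotheses on the maps L_i. Then there exists C < ∞ (depending only on the L_i) such that for any S ⊂ ℤ⁴, Σ_{k∈S} Λ(R_{k₁}^{(1)}, R_{k₂}^{(2)}, R_{k₃}^{(3)}, R_{k₄}^{(4)}) ≤ C · [sup_{k∈S} 2^{−(max_i k_i − min_j k_j)/2}] · [sup_{k∈S} max_n |R_{k_n}^{(n)}|] · max_j Σ_k |R_k^{(j)}|. -/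

import Mathlib

open MeasureTheory Set

noncomputable section

abbrev R2 := ℝ × ℝ

def LamPS (L1 L2 : Fin 4 → R2 →ₗ[ℝ] ℝ) (E : Fin 4 → Set R2) : ℝ :=
  ∫ z : R2 × R2, ∏ n, (E n).indicator (fun _ => (1 : ℝ)) (L1 n z.1, L2 n z.2)

lemma meas_X (L : Fin 4 → R2 →ₗ[ℝ] ℝ) (I : Fin 4 → Set ℝ) (hI : ∀ n, MeasurableSet (I n)) :
    MeasurableSet {x : R2 | ∀ n, L n x ∈ I n} := by
  have : {x : R2 | ∀ n, L n x ∈ I n} = ⋂ n, (L n) ⁻¹' I n := by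
    ext x; simp [Set.mem_iInter]
  rw [this]
  exact MeasurableSet.iInter fun n =>
    ((L n).continuous_of_finiteDimensional.measurable (hI n))

lemma lam_eq (L1 L2 : Fin 4 → R2 →ₗ[ℝ] ℝ) (I J : Fin 4 → Set ℝ)
    (hI : ∀ n, MeasurableSet (I n)) (hJ : ∀ n, MeasurableSet (J n)) :
    LamPS L1 L2 (fun n => (I n) ×ˢ (J n)) =
      (volume {x : R2 | ∀ n, L1 n x ∈ I n}).toReal *
      (volume {y : R2 | ∀ n, L2 n y ∈ J n}).toReal := by
  set X := {x : R2 | ∀ n, L1 n x ∈ I n}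
  set Y := {y : R2 | ∀ n, L2 n y ∈ J n}
  have key : ∀ z : R2 × R2,
      (∏ n, ((I n) ×ˢ (J n)).indicator (fun _ => (1:ℝ)) (L1 n z.1, L2 n z.2)) =
      (X ×ˢ Y).indicator (fun _ => (1:ℝ)) z := by
    intro z
    by_cases h : z ∈ X ×ˢ Y
    · rw [Set.indicator_of_mem h]
      obtain ⟨h1, h2⟩ := h
      rw [Finset.prod_eq_one]
      intro n _
      exact Set.indicator_of_mem (Set.mk_mem_prod (h1 n) (h2 n)) _
    · rw [Set.indicator_of_notMem h]
      have : ∃ n, (L1 n z.1, L2 n z.2) ∉ (I n) ×ˢ (J n) := by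
        by_contra hc
        push_neg at hc
        exact h ⟨fun n => (hc n).1, fun n => (hc n).2⟩
      obtain ⟨n, hn⟩ := this
      exact Finset.prod_eq_zero (Finset.mem_univ n) (Set.indicator_of_notMem hn _)
  have hX := meas_X L1 I hI
  have hY := meas_X L2 J hJ
  calc LamPS L1 L2 (fun n => (I n) ×ˢ (J n))
      = ∫ z : R2 × R2, (X ×ˢ Y).indicator (fun _ => (1:ℝ)) z := by
        unfold LamPS; exact integral_congr_ae (Filter.Eventually.of_forall key)
    _ = (volume (X ×ˢ Y)).toReal := integral_indicator_one (hX.prod hY)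
    _ = (volume X).toReal * (volume Y).toReal := by
        rw [Measure.volume_eq_prod, Measure.prod_prod, ENNReal.toReal_mul]

lemma vol_pair (L : Fin 4 → R2 →ₗ[ℝ] ℝ) {i j : Fin 4}
    (hbij : Function.Bijective (fun x : R2 => (L i x, L j x)))
    (I : Fin 4 → Set ℝ) :
    volume {x : R2 | ∀ n, L n x ∈ I n} ≤
      ENNReal.ofReal |(LinearMap.det ((L i).prod (L j)))⁻¹| *
        (volume (I i) * volume (I j)) := by
  set T := (L i).prod (L j) with hT
  have hdet : LinearMap.det T ≠ 0 := by
    have : IsUnit (LinearMap.det ((LinearEquiv.ofBijective T hbij :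
        R2 ≃ₗ[ℝ] R2) : R2 →ₗ[ℝ] R2)) :=
      LinearEquiv.isUnit_det' _
    exact this.ne_zero
  have hsub : {x : R2 | ∀ n, L n x ∈ I n} ⊆ T ⁻¹' ((I i) ×ˢ (I j)) :=
    fun x hx => ⟨hx i, hx j⟩
  calc volume {x : R2 | ∀ n, L n x ∈ I n}
      ≤ volume (T ⁻¹' ((I i) ×ˢ (I j))) := measure_mono hsub
    _ = ENNReal.ofReal |(LinearMap.det T)⁻¹| * volume ((I i) ×ˢ (I j)) :=
        Measure.addHaar_preimage_linearMap volume hdet _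
    _ = _ := by rw [Measure.volume_eq_prod, Measure.prod_prod]

lemma summable_pi_prod (h : Fin 4 → ℤ → ℝ) (hpos : ∀ i t, 0 ≤ h i t)
    (hsum : ∀ i, Summable (h i)) :
    Summable (fun t : Fin 4 → ℤ => ∏ i, h i (t i)) ∧
      ∑' t : Fin 4 → ℤ, ∏ i, h i (t i) ≤ ∏ i, ∑' s, h i s := by
  have key : ∀ U : Finset (Fin 4 → ℤ),
      ∑ t ∈ U, ∏ i, h i (t i) ≤ ∏ i, ∑' s, h i s := by
    intro U
    have hsub : U ⊆ Fintype.piFinset (fun i => U.image (fun t => t i)) := by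
      intro t ht
      rw [Fintype.mem_piFinset]
      intro i
      exact Finset.mem_image_of_mem _ ht
    calc ∑ t ∈ U, ∏ i, h i (t i)
        ≤ ∑ t ∈ Fintype.piFinset (fun i => U.image (fun t => t i)), ∏ i, h i (t i) :=
          Finset.sum_le_sum_of_subset_of_nonneg hsub
            (fun t _ _ => Finset.prod_nonneg fun i _ => hpos i _)
      _ = ∏ i, ∑ s ∈ U.image (fun t => t i), h i s :=
          (Finset.prod_univ_sum _ _).symm
      _ ≤ ∏ i, ∑' s, h i s :=
          Finset.prod_le_prod (fun i _ => Finset.sum_nonneg fun s _ => hpos i s)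
            (fun i _ => Summable.sum_le_tsum _ (fun s _ => hpos i s) (hsum i))
  have hs : Summable (fun t : Fin 4 → ℤ => ∏ i, h i (t i)) :=
    summable_of_sum_le (fun t => Finset.prod_nonneg fun i _ => hpos i _) key
  exact ⟨hs, Summable.tsum_le_of_sum_le hs key⟩

def wfun (t : ℤ) : ℝ := ((2:ℝ) ^ (-(1/6 : ℝ))) ^ t.natAbs

lemma wfun_nonneg (t : ℤ) : 0 ≤ wfun t :=
  pow_nonneg (Real.rpow_nonneg (by norm_num) _) _

lemma wfun_summable : Summable wfun := by
  have hr0 : (0:ℝ) ≤ (2:ℝ) ^ (-(1/6 : ℝ)) := Real.rpow_nonneg (by norm_num) _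
  have hr1 : (2:ℝ) ^ (-(1/6 : ℝ)) < 1 :=
    Real.rpow_lt_one_of_one_lt_of_neg (by norm_num) (by norm_num)
  have hgeo : Summable (fun n : ℕ => ((2:ℝ) ^ (-(1/6 : ℝ))) ^ n) :=
    summable_geometric_of_lt_one hr0 hr1
  apply Summable.of_nat_of_neg
  · simpa [wfun] using hgeo
  · have : ∀ n : ℕ, wfun (-(n:ℤ)) = ((2:ℝ) ^ (-(1/6 : ℝ))) ^ n := by
      intro n; simp [wfun]
    simpa [this] using hgeo

lemma wfun_eq_rpow (t : ℤ) : wfun t = (2:ℝ) ^ (-(t.natAbs : ℝ)/6) := by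
  rw [wfun, ← Real.rpow_natCast ((2:ℝ) ^ (-(1/6 : ℝ))) t.natAbs,
    ← Real.rpow_mul (by norm_num)]
  ring_nf

lemma wfun_ge {t δ : ℤ} (h : |t| ≤ δ) :
    (2:ℝ) ^ (-(δ:ℝ)/6) ≤ wfun t := by
  rw [wfun_eq_rpow]
  apply Real.rpow_le_rpow_left_iff (x := 2) (by norm_num) |>.mpr
  have h3 := (Int.cast_le (R := ℝ)).mpr h
  push_cast [Nat.cast_natAbs] at h3 ⊢
  linarith

def shear (j : Fin 4) : (Fin 4 → ℤ) ≃ (Fin 4 → ℤ) where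
  toFun k := fun i => if i = j then k j else k i - k j
  invFun t := fun i => if i = j then t j else t i + t j
  left_inv k := by funext i; by_cases h : i = j <;> simp [h]
  right_inv t := by funext i; by_cases h : i = j <;> simp [h]

def dlt (k : Fin 4 → ℤ) : ℤ :=
  Finset.univ.sup' Finset.univ_nonempty k - Finset.univ.inf' Finset.univ_nonempty k

lemma dlt_nonneg (k : Fin 4 → ℤ) : 0 ≤ dlt k := by
  have h1 : Finset.univ.inf' Finset.univ_nonempty k ≤ k 0 :=
    Finset.inf'_le _ (Finset.mem_univ 0)
  have h2 : k 0 ≤ Finset.univ.sup' Finset.univ_nonempty k :=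
    Finset.le_sup' _ (Finset.mem_univ 0)
  unfold dlt; omega

lemma abs_sub_le_dlt (k : Fin 4 → ℤ) (i j : Fin 4) : |k i - k j| ≤ dlt k := by
  have h1 : Finset.univ.inf' Finset.univ_nonempty k ≤ k j :=
    Finset.inf'_le _ (Finset.mem_univ j)
  have h2 : k i ≤ Finset.univ.sup' Finset.univ_nonempty k :=
    Finset.le_sup' _ (Finset.mem_univ i)
  have h3 : Finset.univ.inf' Finset.univ_nonempty k ≤ k i :=
    Finset.inf'_le _ (Finset.mem_univ i)
  have h4 : k j ≤ Finset.univ.sup' Finset.univ_nonempty k :=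
    Finset.le_sup' _ (Finset.mem_univ j)
  rw [abs_le]; unfold dlt; omega

/-- key comparison : `2^(-dlt k / 2) ≤ ∏_{i ≠ j} wfun (k i - k j)` -/
lemma rpow_dlt_le (k : Fin 4 → ℤ) (j : Fin 4) :
    (2:ℝ) ^ (-(dlt k : ℝ)/2) ≤ ∏ i ∈ Finset.univ.erase j, wfun (k i - k j) := by
  have hcard : (Finset.univ.erase j).card = 3 := by
    rw [Finset.card_erase_of_mem (Finset.mem_univ j)]; simp
  have step1 : (2:ℝ) ^ (-(dlt k : ℝ)/2) =
      ∏ _i ∈ Finset.univ.erase j, (2:ℝ) ^ (-(dlt k : ℝ)/6) := by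
    rw [Finset.prod_const, hcard, ← Real.rpow_natCast ((2:ℝ) ^ (-(dlt k : ℝ)/6)) 3,
      ← Real.rpow_mul (by norm_num)]
    congr 1
    ring
  rw [step1]
  apply Finset.prod_le_prod
  · intro i _; exact Real.rpow_nonneg (by norm_num) _
  · intro i _; exact wfun_ge (abs_sub_le_dlt k i j)


lemma sum_pi_prod_le (h : Fin 4 → ℤ → ℝ) (hpos : ∀ i t, 0 ≤ h i t)
    (hsum : ∀ i, Summable (h i)) (U : Finset (Fin 4 → ℤ)) :
    ∑ t ∈ U, ∏ i, h i (t i) ≤ ∏ i, ∑' s, h i s := by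
  have hsub : U ⊆ Fintype.piFinset (fun i => U.image (fun t => t i)) := by
    intro t ht
    rw [Fintype.mem_piFinset]
    intro i
    exact Finset.mem_image_of_mem _ ht
  calc ∑ t ∈ U, ∏ i, h i (t i)
      ≤ ∑ t ∈ Fintype.piFinset (fun i => U.image (fun t => t i)), ∏ i, h i (t i) :=
        Finset.sum_le_sum_of_subset_of_nonneg hsub
          (fun t _ _ => Finset.prod_nonneg fun i _ => hpos i _)
    _ = ∏ i, ∑ s ∈ U.image (fun t => t i), h i s :=
        (Finset.prod_univ_sum _ _).symm
    _ ≤ ∏ i, ∑' s, h i s :=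
        Finset.prod_le_prod (fun i _ => Finset.sum_nonneg fun s _ => hpos i s)
          (fun i _ => Summable.sum_le_tsum _ (fun s _ => hpos i s) (hsum i))

def phi (j : Fin 4) (k : Fin 4 → ℤ) : Fin 4 → ℤ :=
  fun i => if i = j then k j else k i - k j

lemma phi_injective (j : Fin 4) : Function.Injective (phi j) := by
  intro k k' he
  have hj : k j = k' j := by
    have := congrFun he j
    simpa [phi] using this
  funext i
  by_cases hij : i = j
  · rw [hij]; exact hj
  · have := congrFun he i
    simp only [phi, if_neg hij] at this
    omega

/-- main summability lemma for a single `j` -/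
lemma summable_Fj (g : ℤ → ℝ) (hg0 : ∀ t, 0 ≤ g t) (hgs : Summable g) (j : Fin 4) :
    Summable (fun k : Fin 4 → ℤ => (2:ℝ) ^ (-(dlt k : ℝ)/2) * g (k j)) ∧
      ∑' k : Fin 4 → ℤ, (2:ℝ) ^ (-(dlt k : ℝ)/2) * g (k j) ≤
        (∑' s, wfun s) ^ 3 * ∑' s, g s := by
  classical
  set h : Fin 4 → ℤ → ℝ := fun i => if i = j then g else wfun with hh
  have hpos : ∀ i t, 0 ≤ h i t := by
    intro i t; by_cases hij : i = j <;> simp [hh, hij, hg0, wfun_nonneg]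
  have hsum : ∀ i, Summable (h i) := by
    intro i; by_cases hij : i = j <;> simp [hh, hij, hgs, wfun_summable]
  set W : (Fin 4 → ℤ) → ℝ := fun k => g (k j) * ∏ i ∈ Finset.univ.erase j, wfun (k i - k j)
    with hW
  have hW0 : ∀ k, 0 ≤ W k := fun k =>
    mul_nonneg (hg0 _) (Finset.prod_nonneg fun i _ => wfun_nonneg _)
  have hprodtsum : (∏ i, ∑' s, h i s) = (∑' s, wfun s) ^ 3 * ∑' s, g s := by
    have e1 : ∏ i ∈ Finset.univ.erase j, (∑' s, h i s)
        = ∏ _i ∈ Finset.univ.erase j, (∑' s, wfun s) :=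
      Finset.prod_congr rfl fun i hi => by
        have hij : i ≠ j := Finset.ne_of_mem_erase hi
        simp only [hh, if_neg hij]
    have e0 : (∑' s, h j s) = ∑' s, g s := by simp only [hh, if_pos rfl]
    rw [← Finset.mul_prod_erase Finset.univ (fun i => ∑' s, h i s) (Finset.mem_univ j),
      e0, e1, Finset.prod_const, Finset.card_erase_of_mem (Finset.mem_univ j)]
    have : (Finset.univ : Finset (Fin 4)).card - 1 = 3 := by simp
    rw [this]
    ring
  have hWV : ∀ k, W k = ∏ i, h i (phi j k i) := by
    intro k
    have e2 : ∏ i ∈ Finset.univ.erase j, wfun (k i - k j)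
        = ∏ i ∈ Finset.univ.erase j, h i (phi j k i) :=
      Finset.prod_congr rfl fun i hi => by
        have hij : i ≠ j := Finset.ne_of_mem_erase hi
        simp [hh, phi, hij]
    have e3 : g (k j) = h j (phi j k j) := by simp [hh, phi]
    calc W k = h j (phi j k j) * ∏ i ∈ Finset.univ.erase j, h i (phi j k i) := by
          rw [hW]; dsimp only; rw [e2, e3]
      _ = ∏ i, h i (phi j k i) :=
          Finset.mul_prod_erase Finset.univ (fun i => h i (phi j k i)) (Finset.mem_univ j)
  have hWkey : ∀ U : Finset (Fin 4 → ℤ), ∑ k ∈ U, W k ≤ (∑' s, wfun s) ^ 3 * ∑' s, g s := by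
    intro U
    calc ∑ k ∈ U, W k = ∑ k ∈ U, ∏ i, h i (phi j k i) := Finset.sum_congr rfl fun k _ => hWV k
      _ = ∑ t ∈ U.image (phi j), ∏ i, h i (t i) := by
          rw [Finset.sum_image (fun x _ y _ hxy => phi_injective j hxy)]
      _ ≤ ∏ i, ∑' s, h i s := sum_pi_prod_le h hpos hsum _
      _ = _ := hprodtsum
  have hWsum : Summable W := summable_of_sum_le hW0 hWkey
  have hFle : ∀ k : Fin 4 → ℤ, (2:ℝ) ^ (-(dlt k : ℝ)/2) * g (k j) ≤ W k := by
    intro k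
    rw [hW, mul_comm ((2:ℝ) ^ (-(dlt k : ℝ)/2)) (g (k j))]
    exact mul_le_mul_of_nonneg_left (rpow_dlt_le k j) (hg0 _)
  have hF0 : ∀ k : Fin 4 → ℤ, 0 ≤ (2:ℝ) ^ (-(dlt k : ℝ)/2) * g (k j) :=
    fun k => mul_nonneg (Real.rpow_nonneg (by norm_num) _) (hg0 _)
  have hFsum : Summable (fun k : Fin 4 → ℤ => (2:ℝ) ^ (-(dlt k : ℝ)/2) * g (k j)) :=
    Summable.of_nonneg_of_le hF0 hFle hWsum
  refine ⟨hFsum, ?_⟩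
  calc ∑' k : Fin 4 → ℤ, (2:ℝ) ^ (-(dlt k : ℝ)/2) * g (k j)
      ≤ ∑' k, W k := Summable.tsum_le_tsum hFle hFsum hWsum
    _ ≤ (∑' s, wfun s) ^ 3 * ∑' s, g s := Summable.tsum_le_of_sum_le hWsum hWkey

lemma LamPS_nonneg (L1 L2 : Fin 4 → R2 →ₗ[ℝ] ℝ) (E : Fin 4 → Set R2) :
    0 ≤ LamPS L1 L2 E :=
  integral_nonneg fun _z => Finset.prod_nonneg fun _n _ =>
    Set.indicator_nonneg (fun _ _ => zero_le_one) _

/-- pointwise rectangle bound -/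
lemma lam_bound (L1 L2 : Fin 4 → R2 →ₗ[ℝ] ℝ) (a b c : Fin 4 → ℤ → ℝ)
    (hab : ∀ j k, a j k ≤ b j k) (k : Fin 4 → ℤ) {i1 j1 i2 j2 : Fin 4}
    (h1 : Function.Bijective (fun x : R2 => (L1 i1 x, L1 j1 x)))
    (h2 : Function.Bijective (fun y : R2 => (L2 i2 y, L2 j2 y))) :
    LamPS L1 L2 (fun j =>
        Icc (a j (k j)) (b j (k j)) ×ˢ Icc (c j (k j)) (c j (k j) + 2 ^ (k j))) ≤
      (|(LinearMap.det ((L1 i1).prod (L1 j1)))⁻¹| *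
        ((b i1 (k i1) - a i1 (k i1)) * (b j1 (k j1) - a j1 (k j1)))) *
      (|(LinearMap.det ((L2 i2).prod (L2 j2)))⁻¹| *
        ((2:ℝ) ^ (k i2) * (2:ℝ) ^ (k j2))) := by
  set In : Fin 4 → Set ℝ := fun j => Icc (a j (k j)) (b j (k j)) with hIn
  set Jn : Fin 4 → Set ℝ := fun j => Icc (c j (k j)) (c j (k j) + 2 ^ (k j)) with hJn
  have heq := lam_eq L1 L2 In Jn (fun n => measurableSet_Icc) (fun n => measurableSet_Icc)
  rw [heq]
  -- x-side
  have hX := vol_pair L1 h1 In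
  have hY := vol_pair L2 h2 Jn
  have hd1 : (0:ℝ) ≤ |(LinearMap.det ((L1 i1).prod (L1 j1)))⁻¹| := abs_nonneg _
  have hd2 : (0:ℝ) ≤ |(LinearMap.det ((L2 i2).prod (L2 j2)))⁻¹| := abs_nonneg _
  have hIvol : ∀ n, volume (In n) = ENNReal.ofReal (b n (k n) - a n (k n)) := by
    intro n; rw [hIn]; exact Real.volume_Icc
  have hJvol : ∀ n, volume (Jn n) = ENNReal.ofReal ((2:ℝ) ^ (k n)) := by
    intro n; rw [hJn]; simp [Real.volume_Icc]
  have hXr : (volume {x : R2 | ∀ n, L1 n x ∈ In n}).toReal ≤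
      |(LinearMap.det ((L1 i1).prod (L1 j1)))⁻¹| *
        ((b i1 (k i1) - a i1 (k i1)) * (b j1 (k j1) - a j1 (k j1))) := by
    have hb : ENNReal.ofReal |(LinearMap.det ((L1 i1).prod (L1 j1)))⁻¹| *
        (volume (In i1) * volume (In j1)) =
        ENNReal.ofReal (|(LinearMap.det ((L1 i1).prod (L1 j1)))⁻¹| *
          ((b i1 (k i1) - a i1 (k i1)) * (b j1 (k j1) - a j1 (k j1)))) := by
      rw [hIvol, hIvol, ← ENNReal.ofReal_mul (by linarith [hab i1 (k i1)] : (0:ℝ) ≤ b i1 (k i1) - a i1 (k i1)),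
        ← ENNReal.ofReal_mul hd1]
    rw [hb] at hX
    calc (volume {x : R2 | ∀ n, L1 n x ∈ In n}).toReal
        ≤ (ENNReal.ofReal (|(LinearMap.det ((L1 i1).prod (L1 j1)))⁻¹| *
            ((b i1 (k i1) - a i1 (k i1)) * (b j1 (k j1) - a j1 (k j1))))).toReal :=
          ENNReal.toReal_mono ENNReal.ofReal_ne_top hX
      _ ≤ _ := le_of_eq (ENNReal.toReal_ofReal (mul_nonneg hd1 (mul_nonneg
          (by linarith [hab i1 (k i1)]) (by linarith [hab j1 (k j1)]))))
  have hYr : (volume {y : R2 | ∀ n, L2 n y ∈ Jn n}).toReal ≤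
      |(LinearMap.det ((L2 i2).prod (L2 j2)))⁻¹| *
        ((2:ℝ) ^ (k i2) * (2:ℝ) ^ (k j2)) := by
    have hb : ENNReal.ofReal |(LinearMap.det ((L2 i2).prod (L2 j2)))⁻¹| *
        (volume (Jn i2) * volume (Jn j2)) =
        ENNReal.ofReal (|(LinearMap.det ((L2 i2).prod (L2 j2)))⁻¹| *
          ((2:ℝ) ^ (k i2) * (2:ℝ) ^ (k j2))) := by
      rw [hJvol, hJvol, ← ENNReal.ofReal_mul (le_of_lt (zpow_pos (by norm_num) _)),
        ← ENNReal.ofReal_mul hd2]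
    rw [hb] at hY
    calc (volume {y : R2 | ∀ n, L2 n y ∈ Jn n}).toReal
        ≤ (ENNReal.ofReal (|(LinearMap.det ((L2 i2).prod (L2 j2)))⁻¹| *
            ((2:ℝ) ^ (k i2) * (2:ℝ) ^ (k j2)))).toReal :=
          ENNReal.toReal_mono ENNReal.ofReal_ne_top hY
      _ ≤ _ := le_of_eq (ENNReal.toReal_ofReal (mul_nonneg hd2 (mul_nonneg
          (le_of_lt (zpow_pos (by norm_num) _)) (le_of_lt (zpow_pos (by norm_num) _)))))
  exact mul_le_mul hXr hYr ENNReal.toReal_nonneg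
    (le_trans ENNReal.toReal_nonneg hXr)

/-- pointwise bound in sorted form -/
lemma lam_bound_sorted (L1 L2 : Fin 4 → R2 →ₗ[ℝ] ℝ)
    (hnd : ∀ i j, i ≠ j →
      Function.Bijective (fun x : R2 => (L1 i x, L1 j x)) ∧
      Function.Bijective (fun y : R2 => (L2 i y, L2 j y)))
    (a b c : Fin 4 → ℤ → ℝ) (hab : ∀ j k, a j k ≤ b j k) (k : Fin 4 → ℤ) :
    LamPS L1 L2 (fun j =>
        Icc (a j (k j)) (b j (k j)) ×ˢ Icc (c j (k j)) (c j (k j) + 2 ^ (k j))) ≤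
      ((∑ i, ∑ j, |(LinearMap.det ((L1 i).prod (L1 j)))⁻¹|) *
        (∑ i, ∑ j, |(LinearMap.det ((L2 i).prod (L2 j)))⁻¹|)) *
      (((⨆ n, (b n (k n) - a n (k n)) * (2:ℝ) ^ (k n)) *
        (∑ j, (b j (k j) - a j (k j)) * (2:ℝ) ^ (k j))) *
       ((2:ℝ) ^ (-(dlt k : ℝ)/2) * (2:ℝ) ^ (-(dlt k : ℝ)/2))) := by
  classical
  set gg : Fin 4 → ℝ := fun n => (b n (k n) - a n (k n)) * (2:ℝ) ^ (k n) with hgg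
  have hgg0 : ∀ n, 0 ≤ gg n := fun n =>
    mul_nonneg (by linarith [hab n (k n)]) (le_of_lt (zpow_pos (by norm_num) _))
  set σ := Tuple.sort k with hσ
  have hmono := Tuple.monotone_sort k
  have hne1 : σ 2 ≠ σ 3 := fun h => by
    have := σ.injective h; exact absurd this (by decide)
  have hne2 : σ 0 ≠ σ 1 := fun h => by
    have := σ.injective h; exact absurd this (by decide)
  have hbij1 := (hnd _ _ hne1).1
  have hbij2 := (hnd _ _ hne2).2
  have hLB := lam_bound L1 L2 a b c hab k hbij1 hbij2
  set d1 : ℝ := |(LinearMap.det ((L1 (σ 2)).prod (L1 (σ 3))))⁻¹| with hd1def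
  set d2 : ℝ := |(LinearMap.det ((L2 (σ 0)).prod (L2 (σ 1))))⁻¹| with hd2def
  set D1 : ℝ := ∑ i, ∑ j, |(LinearMap.det ((L1 i).prod (L1 j)))⁻¹| with hD1def
  set D2 : ℝ := ∑ i, ∑ j, |(LinearMap.det ((L2 i).prod (L2 j)))⁻¹| with hD2def
  have habs0 : ∀ (M : Fin 4 → R2 →ₗ[ℝ] ℝ) (i j : Fin 4),
      (0:ℝ) ≤ |(LinearMap.det ((M i).prod (M j)))⁻¹| := fun _ _ _ => abs_nonneg _
  have hd1D : d1 ≤ D1 := by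
    rw [hd1def, hD1def]
    calc |(LinearMap.det ((L1 (σ 2)).prod (L1 (σ 3))))⁻¹|
        ≤ ∑ j, |(LinearMap.det ((L1 (σ 2)).prod (L1 j)))⁻¹| :=
          Finset.single_le_sum (fun j _ => habs0 L1 (σ 2) j) (Finset.mem_univ (σ 3))
      _ ≤ ∑ i, ∑ j, |(LinearMap.det ((L1 i).prod (L1 j)))⁻¹| :=
          Finset.single_le_sum
            (fun i _ => Finset.sum_nonneg fun j _ => habs0 L1 i j) (Finset.mem_univ (σ 2))
  have hd2D : d2 ≤ D2 := by
    rw [hd2def, hD2def]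
    calc |(LinearMap.det ((L2 (σ 0)).prod (L2 (σ 1))))⁻¹|
        ≤ ∑ j, |(LinearMap.det ((L2 (σ 0)).prod (L2 j)))⁻¹| :=
          Finset.single_le_sum (fun j _ => habs0 L2 (σ 0) j) (Finset.mem_univ (σ 1))
      _ ≤ ∑ i, ∑ j, |(LinearMap.det ((L2 i).prod (L2 j)))⁻¹| :=
          Finset.single_le_sum
            (fun i _ => Finset.sum_nonneg fun j _ => habs0 L2 i j) (Finset.mem_univ (σ 0))
  have hD10 : 0 ≤ D1 := le_trans (habs0 L1 (σ 2) (σ 3)) hd1D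
  have hD20 : 0 ≤ D2 := le_trans (habs0 L2 (σ 0) (σ 1)) hd2D
  -- exponent bookkeeping
  have hmin : ∀ i, k (σ 0) ≤ k i := by
    intro i
    have h0 : (0 : Fin 4) ≤ σ.symm i := Fin.zero_le _
    have := hmono h0
    simpa [hσ] using this
  have hmax : ∀ i, k i ≤ k (σ 3) := by
    intro i
    have h3 : σ.symm i ≤ (3 : Fin 4) := Fin.le_last _
    have := hmono h3
    simpa [hσ] using this
  have h01 : k (σ 1) ≤ k (σ 2) := hmono (by decide : (1:Fin 4) ≤ 2)
  have hinf : k (σ 0) ≤ Finset.univ.inf' Finset.univ_nonempty k :=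
    Finset.le_inf' _ _ fun i _ => hmin i
  have hsup : Finset.univ.sup' Finset.univ_nonempty k ≤ k (σ 3) :=
    Finset.sup'_le _ _ fun i _ => hmax i
  have he : k (σ 0) + k (σ 1) - k (σ 2) - k (σ 3) ≤ -(dlt k) := by
    unfold dlt; omega
  have hzp : (2:ℝ) ^ (k (σ 0) + k (σ 1) - k (σ 2) - k (σ 3)) ≤ (2:ℝ) ^ (-(dlt k)) :=
    zpow_le_zpow_right₀ one_le_two he
  have hrp : (2:ℝ) ^ (-(dlt k) : ℤ) = (2:ℝ) ^ (-(dlt k : ℝ)/2) * (2:ℝ) ^ (-(dlt k : ℝ)/2) := by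
    rw [← Real.rpow_intCast 2 (-(dlt k)), ← Real.rpow_add (by norm_num)]
    congr 1
    push_cast
    ring
  -- algebraic identity
  have h2 : (2:ℝ) ≠ 0 := two_ne_zero
  have hP : (b (σ 2) (k (σ 2)) - a (σ 2) (k (σ 2))) * (b (σ 3) (k (σ 3)) - a (σ 3) (k (σ 3))) *
      ((2:ℝ) ^ (k (σ 0)) * (2:ℝ) ^ (k (σ 1))) =
      gg (σ 2) * gg (σ 3) * (2:ℝ) ^ (k (σ 0) + k (σ 1) - k (σ 2) - k (σ 3)) := by
    rw [hgg]
    rw [show k (σ 0) + k (σ 1) - k (σ 2) - k (σ 3)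
        = k (σ 0) + (k (σ 1) + (-(k (σ 2)) + -(k (σ 3)))) by ring]
    rw [zpow_add₀ h2, zpow_add₀ h2, zpow_add₀ h2, zpow_neg, zpow_neg]
    have h2a : (2:ℝ) ^ (k (σ 2)) ≠ 0 := ne_of_gt (zpow_pos (by norm_num) _)
    have h2b : (2:ℝ) ^ (k (σ 3)) ≠ 0 := ne_of_gt (zpow_pos (by norm_num) _)
    field_simp
  have hsupb : gg (σ 2) ≤ ⨆ n, gg n := le_ciSup (Set.Finite.bddAbove (Set.finite_range gg)) _
  have hsumb : gg (σ 3) ≤ ∑ j, gg j :=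
    Finset.single_le_sum (fun j _ => hgg0 j) (Finset.mem_univ (σ 3))
  have hsup0 : 0 ≤ ⨆ n, gg n := Real.iSup_nonneg hgg0
  have hsum0 : 0 ≤ ∑ j, gg j := Finset.sum_nonneg fun j _ => hgg0 j
  calc LamPS L1 L2 (fun j =>
        Icc (a j (k j)) (b j (k j)) ×ˢ Icc (c j (k j)) (c j (k j) + 2 ^ (k j)))
      ≤ (d1 * ((b (σ 2) (k (σ 2)) - a (σ 2) (k (σ 2))) *
          (b (σ 3) (k (σ 3)) - a (σ 3) (k (σ 3))))) *
        (d2 * ((2:ℝ) ^ (k (σ 0)) * (2:ℝ) ^ (k (σ 1)))) := hLB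
    _ = (d1 * d2) * (gg (σ 2) * gg (σ 3) *
          (2:ℝ) ^ (k (σ 0) + k (σ 1) - k (σ 2) - k (σ 3))) := by
        rw [← hP]; ring
    _ ≤ (D1 * D2) * (((⨆ n, gg n) * (∑ j, gg j)) * (2:ℝ) ^ (-(dlt k) : ℤ)) := by
        apply mul_le_mul
        · exact mul_le_mul hd1D hd2D (habs0 L2 (σ 0) (σ 1)) hD10
        · apply mul_le_mul
          · exact mul_le_mul hsupb hsumb (hgg0 _) hsup0
          · exact hzp
          · exact le_of_lt (zpow_pos (by norm_num) _)
          · exact mul_nonneg hsup0 hsum0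
        · apply mul_nonneg
          · exact mul_nonneg (hgg0 _) (hgg0 _)
          · exact le_of_lt (zpow_pos (by norm_num) _)
        · exact mul_nonneg hD10 hD20
    _ = _ := by rw [hrp]

/-- Summation lemma over families of rectangles R_k^{(j)} = I_k^{(j)} × J_k^{(j)}
with |J_k^{(j)}| = 2^k. -/
theorem lam_rectangle_sum_bound (L1 L2 : Fin 4 → R2 →ₗ[ℝ] ℝ)
    (hsurj : ∀ n, Function.Surjective (L1 n) ∧ Function.Surjective (L2 n))
    (hnd : ∀ i j, i ≠ j →
      Function.Bijective (fun x : R2 => (L1 i x, L1 j x)) ∧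
      Function.Bijective (fun y : R2 => (L2 i y, L2 j y))) :
    ∃ C : ℝ, 0 ≤ C ∧ ∀ (a b c : Fin 4 → ℤ → ℝ),
      (∀ j k, a j k ≤ b j k) →
      (∀ j, Summable (fun k : ℤ => (b j k - a j k) * 2 ^ k)) →
      ∀ S : Set (Fin 4 → ℤ),
        ∑' k : S, LamPS L1 L2 (fun j =>
            Icc (a j (k.1 j)) (b j (k.1 j)) ×ˢ
              Icc (c j (k.1 j)) (c j (k.1 j) + 2 ^ (k.1 j))) ≤
          C * (⨆ k : S, (2 : ℝ) ^
                (-(((Finset.univ.sup' Finset.univ_nonempty k.1 -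
                    Finset.univ.inf' Finset.univ_nonempty k.1 : ℤ) : ℝ)) / 2)) *
            (⨆ k : S, ⨆ n : Fin 4, (b n (k.1 n) - a n (k.1 n)) * 2 ^ (k.1 n)) *
            ⨆ j : Fin 4, ∑' k : ℤ, (b j k - a j k) * 2 ^ k := by
  classical
  set K : ℝ := ∑' s, wfun s with hKdef
  have hK0 : 0 ≤ K := tsum_nonneg fun s => wfun_nonneg s
  set D1 : ℝ := ∑ i, ∑ j, |(LinearMap.det ((L1 i).prod (L1 j)))⁻¹| with hD1def
  set D2 : ℝ := ∑ i, ∑ j, |(LinearMap.det ((L2 i).prod (L2 j)))⁻¹| with hD2def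
  have hD10 : 0 ≤ D1 :=
    Finset.sum_nonneg fun i _ => Finset.sum_nonneg fun j _ => abs_nonneg _
  have hD20 : 0 ≤ D2 :=
    Finset.sum_nonneg fun i _ => Finset.sum_nonneg fun j _ => abs_nonneg _
  refine ⟨(D1 * D2) * (4 * K ^ 3), by positivity, ?_⟩
  intro a b c hab hsum S
  set gg : Fin 4 → ℤ → ℝ := fun j m => (b j m - a j m) * (2:ℝ) ^ m with hggdef
  have hgg0 : ∀ j m, 0 ≤ gg j m := fun j m =>
    mul_nonneg (by linarith [hab j m]) (le_of_lt (zpow_pos (by norm_num) _))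
  have hggs : ∀ j, Summable (gg j) := hsum
  -- the three factors
  set A : ℝ := ⨆ k : S, (2:ℝ) ^ (-(dlt k.1 : ℝ)/2) with hAdef
  set B : ℝ := ⨆ k : S, ⨆ n : Fin 4, gg n (k.1 n) with hBdef
  set T : ℝ := ⨆ j : Fin 4, ∑' m : ℤ, gg j m with hTdef
  have hA0 : 0 ≤ A := Real.iSup_nonneg fun k => Real.rpow_nonneg (by norm_num) _
  have hAle : ∀ k : S, (2:ℝ) ^ (-(dlt k.1 : ℝ)/2) ≤ A := by
    intro k
    apply le_ciSup (f := fun k : S => (2:ℝ) ^ (-(dlt k.1 : ℝ)/2))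
    refine ⟨1, ?_⟩
    rintro x ⟨k', rfl⟩
    apply Real.rpow_le_one_of_one_le_of_nonpos one_le_two
    have := dlt_nonneg k'.1
    have : (0:ℝ) ≤ (dlt k'.1 : ℝ) := by exact_mod_cast this
    linarith
  have hNN0 : ∀ k : Fin 4 → ℤ, 0 ≤ ⨆ n : Fin 4, gg n (k n) := fun k =>
    Real.iSup_nonneg fun n => hgg0 n (k n)
  have hNNle : ∀ k : Fin 4 → ℤ, (⨆ n : Fin 4, gg n (k n)) ≤ ∑ j, ∑' m, gg j m := by
    intro k
    apply ciSup_le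
    intro n
    calc gg n (k n) ≤ ∑' m, gg n m := Summable.le_tsum (hggs n) _ (fun m _ => hgg0 n m)
      _ ≤ ∑ j, ∑' m, gg j m := Finset.single_le_sum
          (fun j _ => tsum_nonneg fun m => hgg0 j m) (Finset.mem_univ n)
  have hB0 : 0 ≤ B := Real.iSup_nonneg fun k => hNN0 k.1
  have hBle : ∀ k : S, (⨆ n : Fin 4, gg n (k.1 n)) ≤ B := by
    intro k
    apply le_ciSup (f := fun k : S => ⨆ n : Fin 4, gg n (k.1 n))
    exact ⟨∑ j, ∑' m, gg j m, by rintro x ⟨k', rfl⟩; exact hNNle k'.1⟩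
  have hT0 : 0 ≤ T := Real.iSup_nonneg fun j => tsum_nonneg fun m => hgg0 j m
  have hTle : ∀ j, (∑' m, gg j m) ≤ T := by
    intro j
    rw [hTdef]
    exact le_ciSup (f := fun j : Fin 4 => ∑' m : ℤ, gg j m)
      (Set.Finite.bddAbove (Set.finite_range _)) j
  -- summable dominating function
  set GG : (Fin 4 → ℤ) → ℝ := fun k => (2:ℝ) ^ (-(dlt k : ℝ)/2) * ∑ j, gg j (k j)
    with hGGdef
  have hGGsplit : ∀ k, GG k = ∑ j, (2:ℝ) ^ (-(dlt k : ℝ)/2) * gg j (k j) := by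
    intro k; rw [hGGdef]; exact Finset.mul_sum _ _ _
  have hFj : ∀ j : Fin 4,
      Summable (fun k : Fin 4 → ℤ => (2:ℝ) ^ (-(dlt k : ℝ)/2) * gg j (k j)) ∧
      ∑' k : Fin 4 → ℤ, (2:ℝ) ^ (-(dlt k : ℝ)/2) * gg j (k j) ≤ K ^ 3 * ∑' m, gg j m :=
    fun j => summable_Fj (gg j) (hgg0 j) (hggs j) j
  have hGGsum : Summable GG := by
    have : Summable (fun k : Fin 4 → ℤ => ∑ j, (2:ℝ) ^ (-(dlt k : ℝ)/2) * gg j (k j)) :=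
      (hasSum_sum fun j _ => ((hFj j).1).hasSum).summable
    exact this.congr fun k => (hGGsplit k).symm
  have hGG0 : ∀ k, 0 ≤ GG k := fun k =>
    mul_nonneg (Real.rpow_nonneg (by norm_num) _)
      (Finset.sum_nonneg fun j _ => hgg0 j (k j))
  have htGG : ∑' k : Fin 4 → ℤ, GG k ≤ 4 * K ^ 3 * T := by
    calc ∑' k : Fin 4 → ℤ, GG k
        = ∑' k : Fin 4 → ℤ, ∑ j, (2:ℝ) ^ (-(dlt k : ℝ)/2) * gg j (k j) :=
          tsum_congr hGGsplit
      _ = ∑ j, ∑' k : Fin 4 → ℤ, (2:ℝ) ^ (-(dlt k : ℝ)/2) * gg j (k j) :=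
          Summable.tsum_finsetSum fun j _ => (hFj j).1
      _ ≤ ∑ _j : Fin 4, K ^ 3 * T := by
          apply Finset.sum_le_sum
          intro j _
          calc ∑' k : Fin 4 → ℤ, (2:ℝ) ^ (-(dlt k : ℝ)/2) * gg j (k j)
              ≤ K ^ 3 * ∑' m, gg j m := (hFj j).2
            _ ≤ K ^ 3 * T := mul_le_mul_of_nonneg_left (hTle j) (by positivity)
      _ = 4 * K ^ 3 * T := by simp; ring
  -- pointwise bound over S
  have key : ∀ k : S, LamPS L1 L2 (fun j =>
      Icc (a j (k.1 j)) (b j (k.1 j)) ×ˢ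
        Icc (c j (k.1 j)) (c j (k.1 j) + 2 ^ (k.1 j))) ≤
      ((D1 * D2) * A * B) * GG k.1 := by
    intro k
    have h1 := lam_bound_sorted L1 L2 hnd a b c hab k.1
    have hp0 : (0:ℝ) ≤ (2:ℝ) ^ (-(dlt k.1 : ℝ)/2) := Real.rpow_nonneg (by norm_num) _
    have hsum0 : (0:ℝ) ≤ ∑ j, gg j (k.1 j) := Finset.sum_nonneg fun j _ => hgg0 j (k.1 j)
    calc LamPS L1 L2 (fun j =>
          Icc (a j (k.1 j)) (b j (k.1 j)) ×ˢ
            Icc (c j (k.1 j)) (c j (k.1 j) + 2 ^ (k.1 j)))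
        ≤ (D1 * D2) * (((⨆ n : Fin 4, gg n (k.1 n)) * (∑ j, gg j (k.1 j))) *
            ((2:ℝ) ^ (-(dlt k.1 : ℝ)/2) * (2:ℝ) ^ (-(dlt k.1 : ℝ)/2))) := h1
      _ ≤ (D1 * D2) * ((B * (∑ j, gg j (k.1 j))) *
            (A * (2:ℝ) ^ (-(dlt k.1 : ℝ)/2))) := by
          apply mul_le_mul_of_nonneg_left _ (mul_nonneg hD10 hD20)
          apply mul_le_mul
          · exact mul_le_mul_of_nonneg_right (hBle k) hsum0
          · exact mul_le_mul_of_nonneg_right (hAle k) hp0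
          · exact mul_nonneg hp0 hp0
          · exact mul_nonneg hB0 hsum0
      _ = ((D1 * D2) * A * B) * GG k.1 := by rw [hGGdef]; ring
  -- sum up
  have hRHSsum : Summable (fun k : S => ((D1 * D2) * A * B) * GG k.1) :=
    (hGGsum.subtype S).mul_left _
  have hLHSsum : Summable (fun k : S => LamPS L1 L2 (fun j =>
      Icc (a j (k.1 j)) (b j (k.1 j)) ×ˢ
        Icc (c j (k.1 j)) (c j (k.1 j) + 2 ^ (k.1 j)))) :=
    Summable.of_nonneg_of_le (fun k => LamPS_nonneg _ _ _) key hRHSsum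
  have hsubS : ∑' k : S, GG k.1 ≤ ∑' k : Fin 4 → ℤ, GG k := by
    rw [tsum_subtype]
    exact Summable.tsum_le_tsum (fun k => Set.indicator_le_self' (fun x _ => hGG0 x) k)
      (hGGsum.indicator S) hGGsum
  calc ∑' k : S, LamPS L1 L2 (fun j =>
        Icc (a j (k.1 j)) (b j (k.1 j)) ×ˢ
          Icc (c j (k.1 j)) (c j (k.1 j) + 2 ^ (k.1 j)))
      ≤ ∑' k : S, ((D1 * D2) * A * B) * GG k.1 := Summable.tsum_le_tsum key hLHSsum hRHSsum
    _ = ((D1 * D2) * A * B) * ∑' k : S, GG k.1 := tsum_mul_left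
    _ ≤ ((D1 * D2) * A * B) * ∑' k : Fin 4 → ℤ, GG k :=
        mul_le_mul_of_nonneg_left hsubS
          (mul_nonneg (mul_nonneg (mul_nonneg hD10 hD20) hA0) hB0)
    _ ≤ ((D1 * D2) * A * B) * (4 * K ^ 3 * T) :=
        mul_le_mul_of_nonneg_left htGG
          (mul_nonneg (mul_nonneg (mul_nonneg hD10 hD20) hA0) hB0)
    _ = (D1 * D2) * (4 * K ^ 3) * A * B * T := by ring

end
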